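/- Let H be a simple hypergraph, u a vertex of H, and H_{uv} the hypergraph obtained from H by adding a new vertex v and the new edge {u, v}. Then the characteristic polynomial of the unified matrix satisfies P_{U(H_{uv})}(x) = x·P_{U(H)}(x) − P_{U(H)({u}|{u})}(x), where U(H)({u}|{u}) is the principal submatrix of U(H) obtained by deleting the row and column indexed by {u}. -/

import Mathlib

variable {V : Type} [Fintype V] [DecidableEq V]

/-- A finite hypergraph: a finite vertex set and a multiset of nonempty edges. -/
structure FinHypergraph (V : Type) [Fintype V] [DecidableEq V] where
  verts : Finset V
  edges : Multiset (Finset V)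
  edges_sub : ∀ e ∈ edges, e ⊆ verts
  edges_nonempty : ∀ e ∈ edges, e.Nonempty

open Classical in
/-- `IH H` is `I(H)`: all parts of 2-partitions of edges plus all singletons of `V(H)`. -/
noncomputable def IH (H : FinHypergraph V) : Finset (Finset V) :=
  Finset.univ.filter fun S =>
    (S.Nonempty ∧ ∃ e ∈ H.edges, S ⊂ e) ∨ ∃ v ∈ H.verts, S = {v}

/-- The unified matrix of a hypergraph, indexed by `I(H)`. -/
noncomputable def U (H : FinHypergraph V) : Matrix ↥(IH H) ↥(IH H) ℝ := fun S T =>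
  if (S : Finset V) = (T : Finset V) then
    (if (S : Finset V).card = 1 then (H.edges.count (S : Finset V) : ℝ) else 0)
  else if Disjoint (S : Finset V) (T : Finset V) then
    (H.edges.count ((S : Finset V) ∪ (T : Finset V)) : ℝ)
  else 0

/-- Degree of a vertex: number of edges (with multiplicity) containing it. -/
def deg (H : FinHypergraph V) (v : V) : ℕ := (H.edges.filter (fun e => v ∈ e)).card

/-- Unified degree of a set `S`: number of edges (with multiplicity) containing `S`. -/
def udeg (H : FinHypergraph V) (S : Finset V) : ℕ := (H.edges.filter (fun e => S ⊆ e)).card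

/-- `incl H` = ∂(H): number of edges of cardinality ≥ 2 properly contained in another edge. -/
noncomputable def incl (H : FinHypergraph V) : ℕ :=
  Multiset.card (H.edges.filter (fun e => 2 ≤ e.card ∧ ∃ e' ∈ H.edges, e ⊂ e'))

/-- A hypergraph is simple if it has no multiple edges and no loops. -/
def Simple (H : FinHypergraph V) : Prop :=
  H.edges.Nodup ∧ ∀ e ∈ H.edges, 2 ≤ e.card

/-- `tau S` = τ(S): the set of unordered 2-partitions of `S`. -/
def tau (S : Finset V) : Finset (Finset (Finset V)) :=
  (S.powerset.filter fun A => A.Nonempty ∧ A ⊂ S).image fun A => {A, S \ A}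


namespace PendantAux

open Matrix Polynomial

lemma eval_charpoly' {β : Type} [Fintype β] [DecidableEq β] (M : Matrix β β ℝ) (x : ℝ) :
    (M.charpoly).eval x = (x • (1 : Matrix β β ℝ) - M).det := by
  rw [Matrix.charpoly, ← Polynomial.coe_evalRingHom, RingHom.map_det]
  congr 1
  ext i j
  by_cases h : i = j
  · subst h
    simp [charmatrix_apply_eq, Matrix.one_apply]
  · simp [charmatrix_apply_ne _ _ _ h, Matrix.one_apply_ne h]

lemma det_updateRow_single {β : Type} [Fintype β] [DecidableEq β] (N : Matrix β β ℝ) (u0 : β) :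
    (N.updateRow u0 (Pi.single u0 1)).det
      = (Matrix.of (fun i j : {a : β // a ≠ u0} => N i.1 j.1)).det := by
  classical
  let e : {a : β // a ≠ u0} ⊕ Unit ≃ β :=
    { toFun := Sum.elim Subtype.val (fun _ => u0)
      invFun := fun a => if h : a = u0 then Sum.inr () else Sum.inl ⟨a, h⟩
      left_inv := by
        rintro (⟨a, ha⟩ | ⟨⟩)
        · simp [ha]
        · simp
      right_inv := by
        intro a
        by_cases h : a = u0 <;> simp [h] }
  rw [← Matrix.det_submatrix_equiv_self e]
  have hb : (N.updateRow u0 (Pi.single u0 1)).submatrix e e =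
      Matrix.fromBlocks (Matrix.of (fun i j : {a : β // a ≠ u0} => N i.1 j.1))
        (Matrix.of (fun (i : {a : β // a ≠ u0}) (_ : Unit) => N i.1 u0)) 0 1 := by
    ext i j
    rcases i with i | i <;> rcases j with j | j
    · simp [e, Matrix.updateRow_ne i.2]
    · simp [e, Matrix.updateRow_ne i.2]
    · simp [e, Pi.single_apply, Ne.symm j.2]
    · simp [e, Pi.single_apply, Matrix.one_apply]
  rw [hb, Matrix.det_fromBlocks_zero₂₁]
  simp

lemma key_lemma {β : Type} [Fintype β] [DecidableEq β] (M : Matrix β β ℝ) (u0 : β)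
    (M' : Matrix (Option β) (Option β) ℝ)
    (h00 : M' none none = 0)
    (h0s : ∀ a, M' none (some a) = if a = u0 then 1 else 0)
    (hs0 : ∀ a, M' (some a) none = if a = u0 then 1 else 0)
    (hss : ∀ a b, M' (some a) (some b) = M a b) :
    M'.charpoly = Polynomial.X * M.charpoly -
      (Matrix.of (fun i j : {a : β // a ≠ u0} => M i.1 j.1)).charpoly := by
  classical
  apply Polynomial.eq_of_infinite_eval_eq
  apply Set.Infinite.mono (s := ({(0:ℝ)}ᶜ : Set ℝ))
    ?_ ((Set.finite_singleton (0:ℝ)).infinite_compl)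
  intro x hx
  simp only [Set.mem_compl_iff, Set.mem_singleton_iff] at hx
  simp only [Set.mem_setOf_eq]
  -- RHS
  rw [eval_sub, eval_mul, eval_X, eval_charpoly', eval_charpoly', eval_charpoly']
  -- LHS : block decomposition
  let e : β ⊕ PUnit.{1} ≃ Option β :=
    { toFun := Sum.elim some (fun _ => none)
      invFun := fun o => Option.elim o (Sum.inr PUnit.unit) Sum.inl
      left_inv := by rintro (a | ⟨⟩) <;> rfl
      right_inv := by rintro (_ | a) <;> rfl }
  rw [← Matrix.det_submatrix_equiv_self e]
  have hblock : (x • (1 : Matrix (Option β) (Option β) ℝ) - M').submatrix e e =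
      Matrix.fromBlocks (x • (1 : Matrix β β ℝ) - M)
        (Matrix.of fun a (_ : PUnit.{1}) => -(if a = u0 then (1:ℝ) else 0))
        (Matrix.of fun (_ : PUnit.{1}) a => -(if a = u0 then (1:ℝ) else 0))
        (Matrix.of fun _ _ => x) := by
    ext i j
    rcases i with a | i <;> rcases j with b | j
    · simp [e, hss, Matrix.one_apply]
    · simp [e, hs0]
    · simp [e, h0s]
    · simp [e, h00]
  rw [hblock]
  have hinvmul : (Matrix.of fun (_ _ : PUnit.{1}) => x) * (Matrix.of fun (_ _ : PUnit.{1}) => x⁻¹) = 1 := by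
    ext i j
    simp [Matrix.mul_apply, mul_inv_cancel₀ hx, Matrix.one_apply]
  haveI : Invertible (Matrix.of fun (_ _ : PUnit.{1}) => x) :=
    ⟨Matrix.of fun _ _ => x⁻¹,
      by ext i j; simp [Matrix.mul_apply, inv_mul_cancel₀ hx, Matrix.one_apply],
      hinvmul⟩
  rw [Matrix.det_fromBlocks₂₂]
  have hinv : (⅟(Matrix.of fun (_ _ : PUnit.{1}) => x) : Matrix PUnit.{1} PUnit.{1} ℝ)
      = Matrix.of fun _ _ => x⁻¹ := invOf_eq_right_inv hinvmul
  have hschur : (x • (1 : Matrix β β ℝ) - M) -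
      (Matrix.of fun a (_ : PUnit.{1}) => -(if a = u0 then (1:ℝ) else 0)) *
        (⅟(Matrix.of fun (_ _ : PUnit.{1}) => x)) *
        (Matrix.of fun (_ : PUnit.{1}) a => -(if a = u0 then (1:ℝ) else 0)) =
      Matrix.updateRow (x • (1 : Matrix β β ℝ) - M) u0
        ((x • (1 : Matrix β β ℝ) - M) u0 + (-x⁻¹) • (Pi.single u0 (1:ℝ) : β → ℝ)) := by
    rw [hinv]
    ext i j
    simp only [Matrix.sub_apply, Matrix.smul_apply, Matrix.mul_apply, Matrix.updateRow_apply,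
      Matrix.of_apply, Pi.add_apply, Pi.smul_apply, Pi.single_apply, Finset.univ_unique,
      Finset.sum_singleton, smul_eq_mul, Matrix.one_apply]
    split_ifs <;> subst_vars <;> first | ring1 | contradiction
  rw [hschur, Matrix.det_updateRow_add, Matrix.updateRow_eq_self, Matrix.det_updateRow_smul,
    det_updateRow_single]
  have hminor : (Matrix.of (fun i j : {a : β // a ≠ u0} =>
      (x • (1 : Matrix β β ℝ) - M) i.1 j.1)) =
      x • (1 : Matrix {a : β // a ≠ u0} {a : β // a ≠ u0} ℝ) -
        (Matrix.of (fun i j : {a : β // a ≠ u0} => M i.1 j.1)) := by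
    ext i j
    by_cases h : i = j
    · subst h; simp [Matrix.one_apply]
    · have : i.1 ≠ j.1 := fun hh => h (Subtype.ext hh)
      simp [Matrix.one_apply_ne h, Matrix.one_apply_ne this]
  rw [hminor, Matrix.det_unique]
  simp only [Matrix.of_apply]
  field_simp
  ring

end PendantAux

lemma mem_IH_iff (H : FinHypergraph V) (S : Finset V) :
    S ∈ IH H ↔ (S.Nonempty ∧ ∃ e ∈ H.edges, S ⊂ e) ∨ ∃ v ∈ H.verts, S = {v} := by
  classical
  simp [IH]

lemma IH_subset_verts (H : FinHypergraph V) {S : Finset V} (hS : S ∈ IH H) : S ⊆ H.verts := by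
  rw [mem_IH_iff] at hS
  rcases hS with ⟨-, e, he, hlt⟩ | ⟨w, hw, rfl⟩
  · exact hlt.subset.trans (H.edges_sub e he)
  · simpa using hw

lemma IH_nonempty (H : FinHypergraph V) {S : Finset V} (hS : S ∈ IH H) : S.Nonempty := by
  rw [mem_IH_iff] at hS
  rcases hS with ⟨h, -⟩ | ⟨w, -, rfl⟩
  · exact h
  · exact ⟨w, Finset.mem_singleton_self w⟩

lemma ssubset_pair {u v : V} {S : Finset V} (hne : S.Nonempty) (h : S ⊂ ({u, v} : Finset V)) :
    S = {u} ∨ S = {v} := by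
  classical
  have hsub := h.subset
  have hSuv : S ≠ {u, v} := h.ne
  by_cases hvS : v ∈ S
  · right
    apply Finset.Subset.antisymm _ (by simpa using hvS)
    intro x hx
    have hx' : x = u ∨ x = v := by simpa using hsub hx
    rcases hx' with h1 | h1
    · exfalso
      apply hSuv
      apply Finset.Subset.antisymm hsub
      intro y hy
      have hy' : y = u ∨ y = v := by simpa using hy
      rcases hy' with h2 | h2
      · rw [h2, ← h1]; exact hx
      · rw [h2]; exact hvS
    · simp [h1]
  · left
    obtain ⟨w, hw⟩ := hne
    have hw' : w = u ∨ w = v := by simpa using hsub hw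
    have huS : u ∈ S := by
      rcases hw' with h1 | h1
      · rwa [h1] at hw
      · exact absurd (h1 ▸ hw) hvS
    apply Finset.Subset.antisymm _ (by simpa using huS)
    intro x hx
    have hx' : x = u ∨ x = v := by simpa using hsub hx
    rcases hx' with h1 | h1
    · simp [h1]
    · exact absurd (h1 ▸ hx) hvS


set_option maxHeartbeats 1000000 in
theorem pendant_edge_charpoly (H H' : FinHypergraph V) (hs : Simple H) (u v : V)
    (hu : u ∈ H.verts) (hv : v ∉ H.verts)
    (hV' : H'.verts = insert v H.verts)
    (hE' : H'.edges = ({u, v} : Finset V) ::ₘ H.edges) :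
    (U H').charpoly = Polynomial.X * (U H).charpoly -
      (Matrix.of (fun i j : {S : ↥(IH H) // (S : Finset V) ≠ {u}} => U H i.1 j.1)).charpoly := by
  classical
  have huv : u ≠ v := fun h => hv (h ▸ hu)
  have hvnotS : ∀ {S : Finset V}, S ∈ IH H → v ∉ S :=
    fun {S} hS hvS => hv (IH_subset_verts H hS hvS)
  have hvedge : ∀ {e : Finset V}, e ∈ H.edges → v ∉ e :=
    fun {e} he hve => hv (H.edges_sub e he hve)
  have humem : {u} ∈ IH H := (mem_IH_iff H {u}).2 (Or.inr ⟨u, hu, rfl⟩)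
  have hvmem : ({v} : Finset V) ∈ IH H' :=
    (mem_IH_iff H' {v}).2 (Or.inr ⟨v, by simp [hV'], rfl⟩)
  have hmem' : ∀ S : Finset V, S ∈ IH H' ↔ S = {v} ∨ S ∈ IH H := by
    intro S
    rw [mem_IH_iff]
    constructor
    · rintro (⟨hne, e, he, hlt⟩ | ⟨w, hw, rfl⟩)
      · rw [hE', Multiset.mem_cons] at he
        rcases he with rfl | he
        · rcases ssubset_pair hne hlt with rfl | rfl
          · exact Or.inr humem
          · exact Or.inl rfl
        · exact Or.inr ((mem_IH_iff H S).2 (Or.inl ⟨hne, e, he, hlt⟩))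
      · rw [hV', Finset.mem_insert] at hw
        rcases hw with rfl | hw
        · exact Or.inl rfl
        · exact Or.inr ((mem_IH_iff H _).2 (Or.inr ⟨w, hw, rfl⟩))
    · rintro (rfl | hS)
      · exact (mem_IH_iff H' _).1 hvmem
      · rw [mem_IH_iff] at hS
        rcases hS with ⟨hne, e, he, hlt⟩ | ⟨w, hw, rfl⟩
        · exact Or.inl ⟨hne, e, by rw [hE']; exact Multiset.mem_cons_of_mem he, hlt⟩
        · exact Or.inr ⟨w, by rw [hV']; exact Finset.mem_insert_of_mem hw, rfl⟩
  have hvnot : ({v} : Finset V) ∉ IH H := fun h => hvnotS h (Finset.mem_singleton_self v)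
  have hvpair : ({v} : Finset V) ≠ ({u, v} : Finset V) := by
    intro h
    have : u ∈ ({v} : Finset V) := by rw [h]; exact Finset.mem_insert_self u {v}
    exact huv (by simpa using this)
  -- the equivalence
  let g : Option ↥(IH H) ≃ ↥(IH H') :=
    { toFun := fun o => o.elim ⟨{v}, hvmem⟩
        (fun S => ⟨S.1, (hmem' S.1).2 (Or.inr S.2)⟩)
      invFun := fun T => if h : T.1 = {v} then none
        else some ⟨T.1, ((hmem' T.1).1 T.2).resolve_left h⟩
      left_inv := by
        rintro (_ | S)
        · simp
        · have : S.1 ≠ {v} := fun h => hvnot (h ▸ S.2)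
          simp [this]
      right_inv := by
        intro T
        by_cases h : T.1 = {v}
        · simp only [h, dif_pos]
          exact Subtype.ext h.symm
        · simp only [h, dif_neg, not_false_iff]
          rfl }
  have gsome : ∀ S : ↥(IH H), ((g (some S)) : Finset V) = S.1 := fun S => rfl
  have gnone : ((g none) : Finset V) = {v} := rfl
  set u0 : ↥(IH H) := ⟨{u}, humem⟩ with hu0
  -- entry computations
  have hcount0 : ∀ {A : Finset V}, v ∈ A → (H.edges.count A : ℝ) = 0 := by
    intro A hvA
    rw [Multiset.count_eq_zero_of_notMem (fun hA => hvedge hA hvA)]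
    simp
  have h00 : (U H') (g none) (g none) = 0 := by
    simp only [U, gnone, if_pos rfl, Finset.card_singleton, if_pos rfl, hE',
      Multiset.count_cons, if_neg hvpair]
    rw [Multiset.count_eq_zero_of_notMem (fun hA => hvedge hA (Finset.mem_singleton_self v))]
    simp
  have hunion : ∀ T : ↥(IH H), (({v} : Finset V) ∪ T.1 = {u, v}) ↔ T.1 = {u} := by
    intro T
    constructor
    · intro h
      have hsub : T.1 ⊆ {u} := by
        intro x hx
        have : x ∈ ({u, v} : Finset V) := by
          rw [← h]; exact Finset.mem_union_right _ hx
        rcases (by simpa using this : x = u ∨ x = v) with h1 | h1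
        · simp [h1]
        · exact absurd (h1 ▸ hx) (hvnotS T.2)
      rcases Finset.subset_singleton_iff.1 hsub with h1 | h1
      · exact absurd h1 (IH_nonempty H T.2).ne_empty
      · exact h1
    · intro h
      rw [h]
      ext x
      simp [or_comm]
  have h0s : ∀ T : ↥(IH H), (U H') (g none) (g (some T)) = if T = u0 then 1 else 0 := by
    intro T
    have hne : ({v} : Finset V) ≠ T.1 := by
      intro h
      exact hvnotS T.2 (h ▸ Finset.mem_singleton_self v)
    have hdisj : Disjoint ({v} : Finset V) T.1 :=
      Finset.disjoint_singleton_left.2 (hvnotS T.2)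
    simp only [U, gnone, gsome, if_neg hne, if_pos hdisj, hE', Multiset.count_cons]
    rw [Multiset.count_eq_zero_of_notMem
      (fun hA => hvedge hA (Finset.mem_union_left _ (Finset.mem_singleton_self v)))]
    have : (T = u0) ↔ ({v} : Finset V) ∪ T.1 = {u, v} := by
      rw [Subtype.ext_iff, hunion]
    by_cases h : T = u0
    · rw [if_pos h, if_pos (this.1 h)]
      simp
    · rw [if_neg h, if_neg (fun hh => h (this.2 hh))]
      simp
  have hs0 : ∀ T : ↥(IH H), (U H') (g (some T)) (g none) = if T = u0 then 1 else 0 := by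
    intro T
    have hne : T.1 ≠ ({v} : Finset V) := by
      intro h
      exact hvnotS T.2 (h ▸ Finset.mem_singleton_self v)
    have hdisj : Disjoint T.1 ({v} : Finset V) :=
      Finset.disjoint_singleton_right.2 (hvnotS T.2)
    simp only [U, gnone, gsome, if_neg hne, if_pos hdisj, hE', Multiset.count_cons]
    rw [Finset.union_comm]
    rw [Multiset.count_eq_zero_of_notMem
      (fun hA => hvedge hA (Finset.mem_union_left _ (Finset.mem_singleton_self v)))]
    have : (T = u0) ↔ ({v} : Finset V) ∪ T.1 = {u, v} := by
      rw [Subtype.ext_iff, hunion]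
    by_cases h : T = u0
    · rw [if_pos h, if_pos (this.1 h)]
      simp
    · rw [if_neg h, if_neg (fun hh => h (this.2 hh))]
      simp
  have hss : ∀ S T : ↥(IH H), (U H') (g (some S)) (g (some T)) = U H S T := by
    intro S T
    simp only [U, gsome]
    by_cases h1 : S.1 = T.1
    · rw [if_pos h1, if_pos h1]
      by_cases h2 : S.1.card = 1
      · rw [if_pos h2, if_pos h2, hE', Multiset.count_cons, if_neg, add_zero]
        intro h
        rw [h, Finset.card_pair huv] at h2
        exact absurd h2 (by norm_num)
      · rw [if_neg h2, if_neg h2]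
    · rw [if_neg h1, if_neg h1]
      by_cases h2 : Disjoint S.1 T.1
      · rw [if_pos h2, if_pos h2, hE', Multiset.count_cons, if_neg, add_zero]
        intro h
        have : v ∈ S.1 ∪ T.1 := by
          rw [h]; exact Finset.mem_insert_of_mem (Finset.mem_singleton_self v)
        rcases Finset.mem_union.1 this with h3 | h3
        · exact hvnotS S.2 h3
        · exact hvnotS T.2 h3
      · rw [if_neg h2, if_neg h2]
  -- assemble
  have hre : (U H').charpoly = ((U H').submatrix g g).charpoly := by
    have h : (U H').submatrix ⇑g ⇑g = (Matrix.reindex g.symm g.symm) (U H') := by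
      ext i j
      simp [Matrix.reindex_apply, Matrix.submatrix_apply]
    rw [h, Matrix.charpoly_reindex]
  rw [hre, PendantAux.key_lemma (U H) u0 ((U H').submatrix g g) h00 h0s hs0 hss]
  congr 1
  let e2 : {a : ↥(IH H) // a ≠ u0} ≃ {S : ↥(IH H) // (S : Finset V) ≠ {u}} :=
    Equiv.subtypeEquivRight (fun S => by simp [hu0, Subtype.ext_iff])
  have h : (Matrix.of (fun i j : {S : ↥(IH H) // (S : Finset V) ≠ {u}} => U H i.1 j.1)) =
      (Matrix.reindex e2 e2) (Matrix.of (fun i j : {a : ↥(IH H) // a ≠ u0} => U H i.1 j.1)) := by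
    ext i j
    rfl
  rw [h, Matrix.charpoly_reindex]
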